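/- Let q ≥ 0 be an integer, τ > 0 a real, and G a graph of order n with minimum degree δ(G) ≥ (1−τ)n. Then G contains (as a subgraph, i.e., there is an injective graph homomorphism into G from) every q-degenerate graph of order l with l ≤ (1−qτ)n. -/
import Mathlib


/-- `H` is contained in `G` as a subgraph: there is an injective graph
homomorphism from `H` into `G`. -/
def Contains {α β : Type*} (G : SimpleGraph α) (H : SimpleGraph β) : Prop :=
  ∃ f : β → α, Function.Injective f ∧ ∀ ⦃u v⦄, H.Adj u v → G.Adj (f u) (f v)

/-- `G` is `q`-degenerate: every (induced) subgraph has a vertex of degree at most `q`. -/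
def Degenerate {α : Type*} (G : SimpleGraph α) (q : ℕ) : Prop :=
  ∀ W : Finset α, W.Nonempty → ∃ v ∈ W, ({u ∈ (↑W : Set α) | G.Adj v u}).ncard ≤ q

theorem stmt11 (q n : ℕ) (τ : ℝ) (hτ : 0 < τ) (G : SimpleGraph (Fin n))
    (hδ : ∀ v, (1 - τ) * n ≤ ((G.neighborSet v).ncard : ℝ)) :
    ∀ l : ℕ, (l : ℝ) ≤ (1 - q * τ) * n →
      ∀ H : SimpleGraph (Fin l), Degenerate H q → Contains G H := by
  intro l
  induction l using Nat.strong_induction_on with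
  | _ l IH =>
    intro hl H hH
    classical
    match l, H, hH, hl, IH with
    | 0, H, hH, hl, IH =>
      exact ⟨Fin.elim0, fun x => x.elim0, fun x => x.elim0⟩
    | m + 1, H, hH, hl, IH =>
      -- pick a vertex v of H with at most q neighbors
      obtain ⟨v, -, hv⟩ := hH Finset.univ ⟨0, Finset.mem_univ 0⟩
      have hvset : {u ∈ ((Finset.univ : Finset (Fin (m+1))) : Set (Fin (m+1))) | H.Adj v u}
          = H.neighborSet v := by
        ext u; simp [SimpleGraph.mem_neighborSet]
      rw [hvset] at hv
      have hvcard : (H.neighborFinset v).card ≤ q := by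
        rwa [Set.ncard_eq_toFinset_card'] at hv
      -- the graph H minus v, pulled back along succAbove
      set H' : SimpleGraph (Fin m) := H.comap v.succAbove with hH'def
      have hsuccinj : Function.Injective v.succAbove := Fin.succAbove_right_injective
      -- H' is q-degenerate
      have hH' : Degenerate H' q := by
        intro W' hW'
        obtain ⟨y, hy, hyc⟩ := hH (W'.map ⟨v.succAbove, hsuccinj⟩)
          hW'.map
        obtain ⟨x, hx, rfl⟩ := Finset.mem_map.mp hy
        refine ⟨x, hx, ?_⟩
        have himage : v.succAbove '' {u ∈ (W' : Set (Fin m)) | H'.Adj x u}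
            ⊆ {u ∈ ((W'.map ⟨v.succAbove, hsuccinj⟩ : Finset (Fin (m+1))) : Set (Fin (m+1))) |
                H.Adj (v.succAbove x) u} := by
          rintro _ ⟨u, ⟨huW, hadj⟩, rfl⟩
          refine ⟨?_, hadj⟩
          simp only [Finset.coe_map, Set.mem_image, Finset.mem_coe]
          exact ⟨u, huW, rfl⟩
        calc {u ∈ (W' : Set (Fin m)) | H'.Adj x u}.ncard
            = (v.succAbove '' {u ∈ (W' : Set (Fin m)) | H'.Adj x u}).ncard :=
              (Set.ncard_image_of_injective _ hsuccinj).symm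
          _ ≤ _ := Set.ncard_le_ncard himage (Set.toFinite _)
          _ ≤ q := hyc
      -- embed H' by induction
      have hml : (m : ℝ) ≤ (1 - q * τ) * n := le_trans (by exact_mod_cast Nat.le_succ m) hl
      obtain ⟨f', hf'inj, hf'hom⟩ := IH m (Nat.lt_succ_self m) hml H' hH'
      -- neighbors of v, as indices in Fin m
      set Nf : Finset (Fin m) := Finset.univ.filter (fun u => H.Adj v (v.succAbove u)) with hNf
      have hNfcard : Nf.card ≤ q := by
        have : Nf.card = (Nf.image v.succAbove).card :=
          (Finset.card_image_of_injective _ hsuccinj).symm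
        rw [this]
        refine le_trans (Finset.card_le_card ?_) hvcard
        intro x hx
        obtain ⟨u, hu, rfl⟩ := Finset.mem_image.mp hx
        simp only [hNf, Finset.mem_filter] at hu
        exact (H.mem_neighborFinset v _).mpr hu.2
      -- candidate set for the image of v
      set C : Finset (Fin n) := Finset.univ.filter (fun w => ∀ u ∈ Nf, G.Adj w (f' u)) with hC
      -- degree bound in real numbers
      have hdeg : ∀ x : Fin n, ((Finset.univ.filter (fun w => ¬ G.Adj w x)).card : ℝ) ≤ τ * n := by
        intro x
        have h1 : (Finset.univ.filter (fun w => G.Adj w x)).card = G.degree x := by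
          rw [← SimpleGraph.card_neighborFinset_eq_degree]
          congr 1; ext w
          simp [SimpleGraph.mem_neighborFinset, SimpleGraph.adj_comm]
        have h2 : (Finset.univ.filter (fun w => ¬ G.Adj w x)).card
            = n - (Finset.univ.filter (fun w => G.Adj w x)).card := by
          rw [Finset.filter_not, Finset.card_sdiff_of_subset (Finset.filter_subset _ _),
            Finset.card_univ, Fintype.card_fin]
        have hdegn : (G.degree x : ℝ) = ((G.neighborSet x).ncard : ℝ) := by
          rw [Set.ncard_eq_toFinset_card']
          norm_cast
        have h3 : (1 - τ) * n ≤ (G.degree x : ℝ) := by rw [hdegn]; exact hδ x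
        have h4 : (Finset.univ.filter (fun w => G.Adj w x)).card ≤ n := by
          calc _ ≤ (Finset.univ : Finset (Fin n)).card := Finset.card_le_card
                (Finset.filter_subset _ _)
            _ = n := by simp
        rw [h2]
        push_cast [h4]
        rw [h1] at *
        nlinarith [h3]
      -- lower bound on |C|
      have hCcard : ((1 - (q : ℝ) * τ) * n) ≤ (C.card : ℝ) := by
        have hcomp : Finset.univ.filter (fun w => ¬ ∀ u ∈ Nf, G.Adj w (f' u))
            ⊆ Nf.biUnion (fun u => Finset.univ.filter (fun w => ¬ G.Adj w (f' u))) := by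
          intro w hw
          simp only [Finset.mem_filter, not_forall] at hw
          obtain ⟨-, u, hu, hnadj⟩ := hw
          exact Finset.mem_biUnion.mpr ⟨u, hu, by simp [hnadj]⟩
        have hcompcard : ((Finset.univ.filter (fun w => ¬ ∀ u ∈ Nf, G.Adj w (f' u))).card : ℝ)
            ≤ (q : ℝ) * (τ * n) := by
          calc ((Finset.univ.filter (fun w => ¬ ∀ u ∈ Nf, G.Adj w (f' u))).card : ℝ)
              ≤ ((Nf.biUnion (fun u => Finset.univ.filter (fun w => ¬ G.Adj w (f' u)))).card : ℝ) := by
                exact_mod_cast Finset.card_le_card hcomp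
            _ ≤ (∑ u ∈ Nf, (Finset.univ.filter (fun w => ¬ G.Adj w (f' u))).card : ℕ) := by
                exact_mod_cast Finset.card_biUnion_le
            _ = ∑ u ∈ Nf, ((Finset.univ.filter (fun w => ¬ G.Adj w (f' u))).card : ℝ) := by
                push_cast; ring
            _ ≤ ∑ u ∈ Nf, τ * n := Finset.sum_le_sum (fun u _ => hdeg (f' u))
            _ = Nf.card * (τ * n) := by rw [Finset.sum_const, nsmul_eq_mul]
            _ ≤ (q : ℝ) * (τ * n) := by
                have : (0:ℝ) ≤ τ * n := by positivity
                exact mul_le_mul_of_nonneg_right (by exact_mod_cast hNfcard) this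
        have hsplit : C.card + (Finset.univ.filter (fun w => ¬ ∀ u ∈ Nf, G.Adj w (f' u))).card
            = n := by
          rw [hC, Finset.card_filter_add_card_filter_not, Finset.card_univ,
            Fintype.card_fin]
        have := hcompcard
        have hn : ((C.card : ℝ) + ((Finset.univ.filter
            (fun w => ¬ ∀ u ∈ Nf, G.Adj w (f' u))).card : ℝ)) = n := by exact_mod_cast hsplit
        nlinarith
      -- choose w in C avoiding the image of f'
      have himgcard : (Finset.univ.image f').card ≤ m := by
        calc (Finset.univ.image f').card ≤ (Finset.univ : Finset (Fin m)).card :=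
              Finset.card_image_le
          _ = m := by simp
      have hClt : (Finset.univ.image f').card < C.card := by
        have h1 : ((m : ℝ) + 1) ≤ (C.card : ℝ) := le_trans (by push_cast at hl ⊢; linarith) hCcard
        have : (m + 1 : ℕ) ≤ C.card := by exact_mod_cast h1
        omega
      have hnotsub : ¬ C ⊆ Finset.univ.image f' := fun hsub =>
        absurd (Finset.card_le_card hsub) (not_le.mpr hClt)
      obtain ⟨w, hwC, hwimg⟩ := Finset.not_subset.mp hnotsub
      have hwadj : ∀ u ∈ Nf, G.Adj w (f' u) := by
        rw [hC, Finset.mem_filter] at hwC; exact hwC.2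
      -- build the embedding
      set g : Fin (m+1) → Fin n := fun x => ((finSuccEquiv' v) x).elim w f' with hg
      have hgv : g v = w := by simp [hg, finSuccEquiv'_at]
      have hgs : ∀ u : Fin m, g (v.succAbove u) = f' u := by
        intro u; simp [hg, finSuccEquiv'_succAbove]
      have hwne : ∀ u : Fin m, w ≠ f' u := by
        intro u he
        exact hwimg (Finset.mem_image.mpr ⟨u, Finset.mem_univ u, he.symm⟩)
      have hcases : ∀ z : Fin (m+1), z = v ∨ ∃ u, z = v.succAbove u := by
        intro z
        rcases eq_or_ne z v with h | h
        · exact Or.inl h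
        · obtain ⟨u, hu⟩ := Fin.exists_succAbove_eq h
          exact Or.inr ⟨u, hu.symm⟩
      refine ⟨g, ?_, ?_⟩
      · -- injective
        intro x y hxy
        rcases hcases x with rfl | ⟨u, rfl⟩
        · rcases hcases y with rfl | ⟨u, rfl⟩
          · rfl
          · rw [hgv, hgs] at hxy
            exact absurd hxy (hwne u)
        · rcases hcases y with rfl | ⟨u', rfl⟩
          · rw [hgv, hgs] at hxy
            exact absurd hxy.symm (hwne u)
          · rw [hgs, hgs] at hxy
            rw [hf'inj hxy]
      · -- homomorphism
        intro x y hxy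
        rcases hcases x with rfl | ⟨u, rfl⟩
        · rcases hcases y with rfl | ⟨u, rfl⟩
          · exact absurd hxy (H.irrefl)
          · rw [hgv, hgs]
            exact hwadj u (Finset.mem_filter.mpr ⟨Finset.mem_univ u, hxy⟩)
        · rcases hcases y with rfl | ⟨u', rfl⟩
          · rw [hgv, hgs]
            exact (hwadj u (Finset.mem_filter.mpr ⟨Finset.mem_univ u, hxy.symm⟩)).symm
          · rw [hgs, hgs]
            exact hf'hom hxy
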